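/- Let m ≥ 1 and let q = (q_1, ..., q_m) be a probability distribution sorted in non-increasing order such that q_j ≤ 2/m for all j = k*+1, ..., m, where 0 ≤ k* < m. Let A = 1 − Σ_{j=1}^{k*} q_j and let q̃ = (q_1, ..., q_{k*}, A/(m−k*), ..., A/(m−k*)) be the probability distribution whose last m−k* components all equal A/(m−k*). Then H(q) ≥ H(q̃) − 2/(e·ln 2), where H denotes the Shannon entropy in bits. -/

import Mathlib

/-- Shannon entropy in bits of a finite vector. -/
noncomputable def shannonH {m : ℕ} (w : Fin m → ℝ) : ℝ :=
  -∑ j, w j * Real.logb 2 (w j)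

private lemma aux_mul_logb_le (x y : ℝ) (hx : 0 ≤ x) (hxy : x ≤ y) :
    x * Real.logb 2 x ≤ x * Real.logb 2 y := by
  rcases eq_or_lt_of_le hx with h | h
  · simp [← h]
  · have hy : 0 < y := lt_of_lt_of_le h hxy
    exact mul_le_mul_of_nonneg_left
      ((Real.logb_le_logb one_lt_two h hy).2 hxy) hx

private lemma aux_xlog (c x : ℝ) (hx : 0 < x) (hc : 0 < c) :
    x * Real.log (c / x) ≤ c / Real.exp 1 := by
  have he : (0:ℝ) < Real.exp 1 := Real.exp_pos 1
  have h1 : 0 < c / (Real.exp 1 * x) := by positivity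
  have h2 := Real.log_le_sub_one_of_pos h1
  have h3 : Real.log (c / (Real.exp 1 * x)) = Real.log (c / x) - 1 := by
    rw [Real.log_div (ne_of_gt hc) (by positivity),
        Real.log_div (ne_of_gt hc) (ne_of_gt hx), Real.log_mul (ne_of_gt he) (ne_of_gt hx),
        Real.log_exp]
    ring
  rw [h3] at h2
  have h4 : Real.log (c / x) ≤ c / (Real.exp 1 * x) := by linarith
  have := mul_le_mul_of_nonneg_left h4 (le_of_lt hx)
  calc x * Real.log (c / x) ≤ x * (c / (Real.exp 1 * x)) := this
    _ = c / Real.exp 1 := by field_simp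

/-- For a sorted probability distribution `q` whose components beyond
`k*` are at most `2/m`, flattening the tail into equal components `A/(m-k*)` can
increase the entropy by at most `2/(e ln 2)`. -/
theorem greedy_entropy_q_vs_qtilde
    (m : ℕ) (hm : 1 ≤ m) (q : Fin m → ℝ)
    (hqnn : ∀ j, 0 ≤ q j) (hqsum : ∑ j, q j = 1) (hqsort : Antitone q)
    (kstar : ℕ) (hk : kstar < m)
    (hsmall : ∀ j : Fin m, kstar ≤ j.val → q j ≤ 2 / (m : ℝ))
    (A : ℝ)
    (hA : A = 1 - ∑ j ∈ Finset.univ.filter (fun j : Fin m => j.val < kstar), q j)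
    (qt : Fin m → ℝ)
    (hqt : ∀ j : Fin m,
      qt j = if j.val < kstar then q j else A / ((m : ℝ) - (kstar : ℝ))) :
    shannonH q ≥ shannonH qt - 2 / (Real.exp 1 * Real.log 2) := by
  have hlog2 : (0:ℝ) < Real.log 2 := Real.log_pos one_lt_two
  have he : (0:ℝ) < Real.exp 1 := Real.exp_pos 1
  have hmR : (0:ℝ) < (m:ℝ) := by exact_mod_cast Nat.lt_of_lt_of_le Nat.zero_lt_one hm
  set T : Finset (Fin m) := Finset.univ.filter (fun j : Fin m => ¬ j.val < kstar) with hT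
  have hcard : T.card = m - kstar := by
    have hTeq : T = Finset.Ici (⟨kstar, hk⟩ : Fin m) := by
      ext j; simp [hT, Fin.le_def]
    rw [hTeq, Fin.card_Ici]
  have hnpos : 0 < m - kstar := Nat.sub_pos_of_lt hk
  have hnR : ((m:ℝ) - (kstar:ℝ)) = ((m - kstar : ℕ) : ℝ) := by
    rw [Nat.cast_sub (le_of_lt hk)]
  have hnRpos : (0:ℝ) < (m:ℝ) - (kstar:ℝ) := by
    rw [hnR]; exact_mod_cast hnpos
  set a : ℝ := A / ((m:ℝ) - (kstar:ℝ)) with ha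
  have hsplit := Finset.sum_filter_add_sum_filter_not Finset.univ
    (fun j : Fin m => j.val < kstar) q
  have hAeq : A = ∑ j ∈ T, q j := by
    rw [hA]; rw [← hsplit] at hqsum; rw [hT]; linarith
  have hA0 : 0 ≤ A := by
    rw [hAeq]; exact Finset.sum_nonneg fun j _ => hqnn j
  have hAle : A ≤ 2 * ((m:ℝ) - (kstar:ℝ)) / (m:ℝ) := by
    rw [hAeq]
    calc ∑ j ∈ T, q j ≤ T.card • (2 / (m:ℝ)) := by
          refine Finset.sum_le_card_nsmul T q _ fun j hj => ?_
          exact hsmall j (le_of_not_gt (by simpa [hT] using hj))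
      _ = 2 * ((m:ℝ) - (kstar:ℝ)) / (m:ℝ) := by
          rw [hcard, nsmul_eq_mul, ← hnR]; ring
  -- main tail inequality
  have key : ∑ j ∈ T, q j * Real.logb 2 (q j) - ∑ j ∈ T, qt j * Real.logb 2 (qt j)
      ≤ 2 / (Real.exp 1 * Real.log 2) := by
    have hqtT : ∑ j ∈ T, qt j * Real.logb 2 (qt j)
        = ((m:ℝ) - (kstar:ℝ)) * (a * Real.logb 2 a) := by
      rw [Finset.sum_congr rfl (fun j hj => by
        rw [hqt j, if_neg (by simpa [hT] using hj)]), Finset.sum_const, hcard,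
        nsmul_eq_mul, ← hnR]
    rw [hqtT]
    rcases eq_or_lt_of_le hA0 with hA0' | hApos
    · -- A = 0 : all tail terms vanish
      have hq0 : ∀ j ∈ T, q j = 0 := by
        intro j hj
        have := (Finset.sum_eq_zero_iff_of_nonneg fun j _ => hqnn j).1 (hAeq ▸ hA0'.symm)
        exact this j hj
      have h1 : ∑ j ∈ T, q j * Real.logb 2 (q j) = 0 :=
        Finset.sum_eq_zero fun j hj => by rw [hq0 j hj]; ring
      have h2 : a = 0 := by rw [ha, ← hA0']; simp
      rw [h1, h2]
      simp only [mul_zero, zero_mul, sub_zero]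
      positivity
    · -- A > 0
      have ha_pos : 0 < a := div_pos hApos hnRpos
      have hstep1 : ∑ j ∈ T, q j * Real.logb 2 (q j) ≤ A * Real.logb 2 (2 / (m:ℝ)) := by
        rw [hAeq, Finset.sum_mul]
        refine Finset.sum_le_sum fun j hj => ?_
        exact aux_mul_logb_le (q j) (2 / (m:ℝ)) (hqnn j)
          (hsmall j (le_of_not_gt (by simpa [hT] using hj)))
      have hna : ((m:ℝ) - (kstar:ℝ)) * (a * Real.logb 2 a) = A * Real.logb 2 a := by
        rw [ha]; field_simp
      rw [hna]
      have hc0 : (0:ℝ) < 2 * ((m:ℝ) - (kstar:ℝ)) / (m:ℝ) := by positivity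
      set c0 : ℝ := 2 * ((m:ℝ) - (kstar:ℝ)) / (m:ℝ) with hc0def
      have hlogdiff : Real.logb 2 (2 / (m:ℝ)) - Real.logb 2 a
          = Real.log (c0 / A) / Real.log 2 := by
        rw [Real.logb, Real.logb, div_sub_div_same]
        congr 1
        rw [Real.log_div (by norm_num) (ne_of_gt hmR),
            Real.log_div (ne_of_gt hc0) (ne_of_gt hApos), ha,
            Real.log_div (ne_of_gt hApos) (ne_of_gt hnRpos), hc0def,
            Real.log_div (by positivity) (ne_of_gt hmR),
            Real.log_mul (by norm_num) (ne_of_gt hnRpos)]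
        ring
      have hxlog : A * Real.log (c0 / A) ≤ c0 / Real.exp 1 := aux_xlog c0 A hApos hc0
      have hc0le : c0 ≤ 2 := by
        rw [hc0def, div_le_iff₀ hmR]
        have : (kstar:ℝ) ≥ 0 := Nat.cast_nonneg _
        nlinarith
      have hfin : A * (Real.logb 2 (2 / (m:ℝ)) - Real.logb 2 a)
          ≤ 2 / (Real.exp 1 * Real.log 2) := by
        rw [hlogdiff]
        have h5 : A * (Real.log (c0 / A) / Real.log 2)
            = (A * Real.log (c0 / A)) / Real.log 2 := by ring
        rw [h5, div_le_div_iff₀ hlog2 (by positivity)]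
        have h6 : A * Real.log (c0 / A) ≤ 2 / Real.exp 1 :=
          le_trans hxlog (by apply div_le_div_of_nonneg_right hc0le he.le)
        calc A * Real.log (c0 / A) * (Real.exp 1 * Real.log 2)
            ≤ (2 / Real.exp 1) * (Real.exp 1 * Real.log 2) := by
              apply mul_le_mul_of_nonneg_right h6 (by positivity)
          _ = 2 * Real.log 2 := by field_simp
      nlinarith [hstep1, hfin]
  -- assemble
  have hsplitq := Finset.sum_filter_add_sum_filter_not Finset.univ
    (fun j : Fin m => j.val < kstar) (fun j => q j * Real.logb 2 (q j))
  have hsplitqt := Finset.sum_filter_add_sum_filter_not Finset.univ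
    (fun j : Fin m => j.val < kstar) (fun j => qt j * Real.logb 2 (qt j))
  have hhead : ∑ j ∈ Finset.univ.filter (fun j : Fin m => j.val < kstar),
      qt j * Real.logb 2 (qt j)
      = ∑ j ∈ Finset.univ.filter (fun j : Fin m => j.val < kstar),
      q j * Real.logb 2 (q j) := by
    refine Finset.sum_congr rfl fun j hj => ?_
    rw [hqt j, if_pos (by simpa using hj)]
  rw [ge_iff_le, shannonH, shannonH, ← hsplitq, ← hsplitqt, hhead]
  simp only [hT] at key
  linarith
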